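/- Two normalized Bessel sequences {g_n} and {g'_n} obtained via the Kaczmarz algorithm from unit vector sequences {e_n} and {e'_n} are unitarily equivalent (g'_n = Vg_n for a unitary V) if and only if UU* = U'U'*, where U, U' are the strictly lower triangular matrices with (I+U)(I+M) = I and (I+U')(I+M') = I, M, M' being the strictly lower triangular parts of the Gram matrices of {e_n}, {e'_n}. -/

import Mathlib

open scoped ComplexInnerProductSpace

lemma kacz_g_eq (H : Type*) [NormedAddCommGroup H] [InnerProductSpace ℂ H]
    (e g : ℕ → H) (M U : ℕ → ℕ → ℂ)
    (hg0 : g 0 = e 0)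
    (hg : ∀ n, 0 < n → g n = e n - ∑ i ∈ Finset.range n, ⟪e i, e n⟫ • g i)
    (hM : ∀ i j, M i j = if j < i then ⟪e j, e i⟫ else 0)
    (hUM : ∀ i j, (∑ k ∈ Finset.range (i + 1),
        (if i = k then 1 else U i k) * (if k = j then 1 else M k j)) =
      if i = j then 1 else 0)
    (n : ℕ) :
    g n = ∑ k ∈ Finset.range (n + 1), (if n = k then (1:ℂ) else U n k) • e k := by
  have heB : ∀ m, e m = ∑ i ∈ Finset.range (m + 1), (if m = i then (1:ℂ) else M m i) • g i := by
    intro m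
    rcases Nat.eq_zero_or_pos m with h0 | hpos
    · subst h0; simp [hg0]
    · rw [Finset.sum_range_succ, if_pos rfl, one_smul, hg m hpos]
      have : ∀ i ∈ Finset.range m, (if m = i then (1:ℂ) else M m i) • g i
          = ⟪e i, e m⟫ • g i := by
        intro i hi
        rw [Finset.mem_range] at hi
        rw [if_neg (Nat.ne_of_gt hi), hM m i, if_pos hi]
      rw [Finset.sum_congr rfl this]
      abel
  have key : ∑ k ∈ Finset.range (n + 1), (if n = k then (1:ℂ) else U n k) • e k
      = ∑ i ∈ Finset.range (n + 1), (if n = i then (1:ℂ) else 0) • g i := by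
    calc ∑ k ∈ Finset.range (n + 1), (if n = k then (1:ℂ) else U n k) • e k
        = ∑ k ∈ Finset.range (n + 1), ∑ i ∈ Finset.range (n + 1),
            ((if n = k then (1:ℂ) else U n k) * (if k = i then 1 else M k i)) • g i := by
          refine Finset.sum_congr rfl fun k hk => ?_
          rw [Finset.mem_range, Nat.lt_succ_iff] at hk
          rw [heB k, Finset.smul_sum]
          rw [← Finset.sum_subset (Finset.range_subset_range.2 (Nat.succ_le_succ hk))]
          · exact Finset.sum_congr rfl fun i _ => (smul_smul _ _ _)
          · intro i _ hi
            rw [Finset.mem_range, Nat.lt_succ_iff, not_le] at hi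
            have : M k i = 0 := by rw [hM k i, if_neg (by omega)]
            rw [if_neg (Nat.ne_of_lt hi), this, mul_zero, zero_smul]
      _ = ∑ i ∈ Finset.range (n + 1), (∑ k ∈ Finset.range (n + 1),
            (if n = k then (1:ℂ) else U n k) * (if k = i then 1 else M k i)) • g i := by
          rw [Finset.sum_comm]
          exact Finset.sum_congr rfl fun i _ => (Finset.sum_smul).symm
      _ = ∑ i ∈ Finset.range (n + 1), (if n = i then (1:ℂ) else 0) • g i := by
          exact Finset.sum_congr rfl fun i _ => by rw [hUM n i]
  rw [key]
  simp

lemma kacz_gram (H : Type*) [NormedAddCommGroup H] [InnerProductSpace ℂ H]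
    (e g : ℕ → H) (M U : ℕ → ℕ → ℂ)
    (he : ∀ n, ‖e n‖ = 1)
    (hg0 : g 0 = e 0)
    (hg : ∀ n, 0 < n → g n = e n - ∑ i ∈ Finset.range n, ⟪e i, e n⟫ • g i)
    (hM : ∀ i j, M i j = if j < i then ⟪e j, e i⟫ else 0)
    (hUtri : ∀ i j, i ≤ j → U i j = 0)
    (hUM : ∀ i j, (∑ k ∈ Finset.range (i + 1),
        (if i = k then 1 else U i k) * (if k = j then 1 else M k j)) =
      if i = j then 1 else 0)
    (i j : ℕ) :
    ⟪g i, g j⟫ = (if i = j then (1:ℂ) else 0)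
      - ∑ k ∈ Finset.range (min i j), U j k * (starRingEnd ℂ) (U i k) := by
  set A : ℕ → ℕ → ℂ := fun p q => if p = q then 1 else U p q with hA
  have hA_zero : ∀ p q, p < q → A p q = 0 := fun p q h => by
    simp only [hA, if_neg (Nat.ne_of_lt h)]; exact hUtri p q h.le
  have hAg : ∀ n, g n = ∑ k ∈ Finset.range (n + 1), A n k • e k :=
    kacz_g_eq H e g M U hg0 hg hM hUM
  -- Gram of e
  have hG : ∀ a b, ⟪e a, e b⟫ = (if b = a then (1:ℂ) else M b a) + (starRingEnd ℂ) (M a b) := by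
    intro a b
    rcases lt_trichotomy a b with h | h | h
    · rw [if_neg (Nat.ne_of_gt h), hM b a, if_pos h, hM a b, if_neg (by omega), map_zero, add_zero]
    · subst h
      rw [if_pos rfl, hM a a, if_neg (lt_irrefl a), map_zero, add_zero,
        inner_self_eq_norm_sq_to_K, he a]
      norm_num
    · rw [if_neg (Nat.ne_of_lt h), hM b a, if_neg (by omega), hM a b, if_pos h,
        inner_conj_symm, zero_add]
  -- expand the inner product
  have expand : ⟪g i, g j⟫ = ∑ a ∈ Finset.range (i + 1), ∑ b ∈ Finset.range (j + 1),
      (starRingEnd ℂ) (A i a) * (A j b * ⟪e a, e b⟫) := by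
    rw [hAg i, hAg j, sum_inner]
    refine Finset.sum_congr rfl fun a _ => ?_
    rw [inner_smul_left, inner_sum, Finset.mul_sum]
    refine Finset.sum_congr rfl fun b _ => ?_
    rw [inner_smul_right]
  have hAM : ∀ b, ∑ a ∈ Finset.range (i + 1), A i a * M a b
      = (if i = b then 1 else 0) - A i b := by
    intro b
    have h := hUM i b
    have hsplit : ∀ k, (if k = b then (1:ℂ) else M k b) = (if k = b then 1 else 0) + M k b := by
      intro k
      by_cases hkb : k = b
      · subst hkb; rw [if_pos rfl, if_pos rfl, hM k k, if_neg (lt_irrefl k), add_zero]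
      · rw [if_neg hkb, if_neg hkb, zero_add]
    calc ∑ a ∈ Finset.range (i + 1), A i a * M a b
        = (∑ a ∈ Finset.range (i + 1), A i a * ((if a = b then 1 else 0) + M a b))
          - ∑ a ∈ Finset.range (i + 1), A i a * (if a = b then 1 else 0) := by
          rw [← Finset.sum_sub_distrib]
          refine Finset.sum_congr rfl fun a _ => by ring
      _ = (if i = b then 1 else 0) - A i b := by
          have h1 : ∑ a ∈ Finset.range (i + 1), A i a * ((if a = b then 1 else 0) + M a b)
              = if i = b then 1 else 0 := by
            rw [← h]
            exact Finset.sum_congr rfl fun a _ => by rw [← hsplit a]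
          have h2 : ∑ a ∈ Finset.range (i + 1), A i a * (if a = b then 1 else 0) = A i b := by
            have : ∀ a, A i a * (if a = b then (1:ℂ) else 0) = if a = b then A i a else 0 := by
              intro a; by_cases hab : a = b <;> simp [hab]
            rw [Finset.sum_congr rfl fun a _ => this a, Finset.sum_ite_eq']
            by_cases hbi : b ∈ Finset.range (i + 1)
            · rw [if_pos hbi]
            · rw [if_neg hbi, hA_zero i b (by simpa [Nat.lt_succ_iff, not_le] using hbi)]
          rw [h1, h2]
  -- split the double sum using hG
  have hsplit2 : ⟪g i, g j⟫
      = (∑ a ∈ Finset.range (i + 1), (starRingEnd ℂ) (A i a) *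
          (∑ b ∈ Finset.range (j + 1), A j b * (if b = a then 1 else M b a)))
        + ∑ b ∈ Finset.range (j + 1), A j b *
            (starRingEnd ℂ) (∑ a ∈ Finset.range (i + 1), A i a * M a b) := by
    rw [expand]
    have : ∀ a ∈ Finset.range (i + 1), ∀ b ∈ Finset.range (j + 1),
        (starRingEnd ℂ) (A i a) * (A j b * ⟪e a, e b⟫)
        = (starRingEnd ℂ) (A i a) * (A j b * (if b = a then 1 else M b a))
          + A j b * ((starRingEnd ℂ) (A i a) * (starRingEnd ℂ) (M a b)) := by
      intro a _ b _
      rw [hG a b]; ring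
    rw [Finset.sum_congr rfl fun a ha => Finset.sum_congr rfl fun b hb => this a ha b hb]
    rw [Finset.sum_congr rfl fun a _ => Finset.sum_add_distrib, Finset.sum_add_distrib]
    congr 1
    · exact Finset.sum_congr rfl fun a _ => (Finset.mul_sum _ _ _).symm
    · rw [Finset.sum_comm]
      refine Finset.sum_congr rfl fun b _ => ?_
      rw [map_sum, Finset.mul_sum]
      refine Finset.sum_congr rfl fun a _ => ?_
      rw [map_mul]
  -- first term
  have hT1 : ∑ a ∈ Finset.range (i + 1), (starRingEnd ℂ) (A i a) *
      (∑ b ∈ Finset.range (j + 1), A j b * (if b = a then 1 else M b a))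
      = (starRingEnd ℂ) (A i j) := by
    have : ∀ a, (∑ b ∈ Finset.range (j + 1), A j b * (if b = a then 1 else M b a))
        = if j = a then 1 else 0 := fun a => hUM j a
    rw [Finset.sum_congr rfl fun a _ => by rw [this a]]
    have : ∀ a, (starRingEnd ℂ) (A i a) * (if j = a then (1:ℂ) else 0)
        = if a = j then (starRingEnd ℂ) (A i a) else 0 := by
      intro a
      by_cases haj : a = j
      · subst haj; rw [if_pos rfl, if_pos rfl, mul_one]
      · rw [if_neg (fun h => haj h.symm), if_neg haj, mul_zero]
    rw [Finset.sum_congr rfl fun a _ => this a, Finset.sum_ite_eq']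
    by_cases hji : j ∈ Finset.range (i + 1)
    · rw [if_pos hji]
    · rw [if_neg hji, hA_zero i j (by simpa [Nat.lt_succ_iff, not_le] using hji), map_zero]
  -- second term
  have hT2 : ∑ b ∈ Finset.range (j + 1), A j b *
      (starRingEnd ℂ) (∑ a ∈ Finset.range (i + 1), A i a * M a b)
      = A j i - ∑ b ∈ Finset.range (j + 1), A j b * (starRingEnd ℂ) (A i b) := by
    have step : ∀ b, A j b * (starRingEnd ℂ) (∑ a ∈ Finset.range (i + 1), A i a * M a b)
        = A j b * (if i = b then 1 else 0) - A j b * (starRingEnd ℂ) (A i b) := by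
      intro b
      rw [hAM b, map_sub, mul_sub]
      congr 2
      by_cases hib : i = b <;> simp [hib]
    rw [Finset.sum_congr rfl fun b _ => step b, Finset.sum_sub_distrib]
    congr 1
    have : ∀ b, A j b * (if i = b then (1:ℂ) else 0) = if b = i then A j b else 0 := by
      intro b
      by_cases hib : b = i
      · subst hib; rw [if_pos rfl, if_pos rfl, mul_one]
      · rw [if_neg (fun h => hib h.symm), if_neg hib, mul_zero]
    rw [Finset.sum_congr rfl fun b _ => this b, Finset.sum_ite_eq']
    by_cases hij : i ∈ Finset.range (j + 1)
    · rw [if_pos hij]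
    · rw [if_neg hij, hA_zero j i (by simpa [Nat.lt_succ_iff, not_le] using hij)]
  rw [hsplit2, hT1, hT2]
  -- peel off b = j
  have hpeel : ∑ b ∈ Finset.range (j + 1), A j b * (starRingEnd ℂ) (A i b)
      = (∑ b ∈ Finset.range j, U j b * (starRingEnd ℂ) (A i b)) + (starRingEnd ℂ) (A i j) := by
    rw [Finset.sum_range_succ]
    congr 1
    · refine Finset.sum_congr rfl fun b hb => ?_
      rw [Finset.mem_range] at hb
      simp only [hA]
      rw [if_neg (Nat.ne_of_gt hb)]
    · show A j j * _ = _
      simp [hA]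
  rw [hpeel]
  have hAdecomp : ∀ b, (starRingEnd ℂ) (A i b)
      = (if i = b then 1 else 0) + (starRingEnd ℂ) (U i b) := by
    intro b
    by_cases hib : i = b
    · subst hib; simp [hA, hUtri i i le_rfl]
    · simp only [hA]
      rw [if_neg hib, if_neg hib, zero_add]
  have hsum : ∑ b ∈ Finset.range j, U j b * (starRingEnd ℂ) (A i b)
      = (if i < j then U j i else 0)
        + ∑ k ∈ Finset.range (min i j), U j k * (starRingEnd ℂ) (U i k) := by
    have : ∀ b, U j b * (starRingEnd ℂ) (A i b)
        = (if b = i then U j b else 0) + U j b * (starRingEnd ℂ) (U i b) := by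
      intro b
      rw [hAdecomp b]
      by_cases hib : b = i
      · subst hib; rw [if_pos rfl, if_pos rfl]; ring
      · rw [if_neg hib, if_neg (fun h => hib h.symm)]; ring
    rw [Finset.sum_congr rfl fun b _ => this b, Finset.sum_add_distrib, Finset.sum_ite_eq']
    congr 1
    · simp only [Finset.mem_range]
    · symm
      refine Finset.sum_subset (Finset.range_subset_range.2 (min_le_right i j)) ?_
      intro b hb hb2
      rw [Finset.mem_range] at hb
      rw [Finset.mem_range, not_lt] at hb2
      have : i ≤ b := by omega
      rw [hUtri i b this, map_zero, mul_zero]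
  rw [hsum]
  have hAji : A j i = (if i < j then U j i else 0) + (if i = j then 1 else 0) := by
    rcases lt_trichotomy i j with h | h | h
    · simp only [hA]
      rw [if_neg (Nat.ne_of_gt h), if_pos h, if_neg (Nat.ne_of_lt h), add_zero]
    · subst h; simp [hA]
    · simp only [hA]
      rw [if_neg (Nat.ne_of_lt h), if_neg (by omega : ¬ i < j), if_neg (by omega : ¬ i = j),
        hUtri j i h.le, add_zero]
  rw [hAji]
  ring


lemma exists_isometry_of_inner_eq
    {H : Type*} [NormedAddCommGroup H] [InnerProductSpace ℂ H] [CompleteSpace H]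
    {H' : Type*} [NormedAddCommGroup H'] [InnerProductSpace ℂ H'] [CompleteSpace H']
    (f : ℕ → H) (f' : ℕ → H')
    (hip : ∀ i j, ⟪f i, f j⟫ = ⟪f' i, f' j⟫)
    (hd : (Submodule.span ℂ (Set.range f)).topologicalClosure = ⊤)
    (hd' : (Submodule.span ℂ (Set.range f')).topologicalClosure = ⊤) :
    ∃ V : H ≃ₗᵢ[ℂ] H', ∀ n, V (f n) = f' n := by
  classical
  set L : (ℕ →₀ ℂ) →ₗ[ℂ] H := Finsupp.linearCombination ℂ f with hL
  set L' : (ℕ →₀ ℂ) →ₗ[ℂ] H' := Finsupp.linearCombination ℂ f' with hL'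
  have hnorm : ∀ c, ‖L c‖ = ‖L' c‖ := by
    intro c
    have hinner : ⟪L c, L c⟫ = ⟪L' c, L' c⟫ := by
      simp only [hL, hL', Finsupp.linearCombination_apply, Finsupp.sum]
      rw [sum_inner, sum_inner]
      refine Finset.sum_congr rfl fun i _ => ?_
      rw [inner_sum, inner_sum]
      refine Finset.sum_congr rfl fun j _ => ?_
      rw [inner_smul_left, inner_smul_right, inner_smul_left, inner_smul_right, hip i j]
    have h1 := inner_self_eq_norm_sq_to_K (𝕜 := ℂ) (L c)
    have h2 := inner_self_eq_norm_sq_to_K (𝕜 := ℂ) (L' c)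
    have h4 : ‖L c‖^2 = ‖L' c‖^2 := by
      exact_mod_cast h1.symm.trans (hinner.trans h2)
    calc ‖L c‖ = Real.sqrt (‖L c‖^2) := (Real.sqrt_sq (norm_nonneg _)).symm
      _ = Real.sqrt (‖L' c‖^2) := by rw [h4]
      _ = ‖L' c‖ := Real.sqrt_sq (norm_nonneg _)
  have hker : LinearMap.ker L = LinearMap.ker L' := by
    ext c
    simp only [LinearMap.mem_ker]
    constructor <;> intro h
    · rw [← norm_eq_zero, ← hnorm c, norm_eq_zero]; exact h
    · rw [← norm_eq_zero, hnorm c, norm_eq_zero]; exact h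
  set ψ : LinearMap.range L ≃ₗ[ℂ] LinearMap.range L' :=
    (LinearMap.quotKerEquivRange L).symm.trans
      ((Submodule.quotEquivOfEq _ _ hker).trans (LinearMap.quotKerEquivRange L')) with hψdef
  have hψ : ∀ c : ℕ →₀ ℂ,
      (ψ ⟨L c, LinearMap.mem_range_self L c⟩ : H') = L' c := by
    intro c
    simp only [hψdef, LinearEquiv.trans_apply]
    rw [LinearMap.quotKerEquivRange_symm_apply_image,
      show (LinearMap.ker L).mkQ c = Submodule.Quotient.mk c from rfl,
      Submodule.quotEquivOfEq_mk, LinearMap.quotKerEquivRange_apply_mk]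
  have hψ' : ∀ c : ℕ →₀ ℂ,
      (ψ.symm ⟨L' c, LinearMap.mem_range_self L' c⟩ : H) = L c := by
    intro c
    have : (⟨L' c, LinearMap.mem_range_self L' c⟩ : LinearMap.range L')
        = ψ ⟨L c, LinearMap.mem_range_self L c⟩ := by
      apply Subtype.ext
      exact (hψ c).symm
    rw [this, LinearEquiv.symm_apply_apply]
  -- continuous linear maps on the ranges
  have hψnorm : ∀ x : LinearMap.range L, ‖(ψ x : H')‖ = ‖(x : H)‖ := by
    rintro ⟨x, c, rfl⟩
    show ‖(ψ ⟨L c, _⟩ : H')‖ = ‖L c‖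
    rw [hψ c]
    exact (hnorm c).symm
  have hψnorm' : ∀ x : LinearMap.range L', ‖(ψ.symm x : H)‖ = ‖(x : H')‖ := by
    rintro ⟨x, c, rfl⟩
    show ‖(ψ.symm ⟨L' c, _⟩ : H)‖ = ‖L' c‖
    rw [hψ' c]
    exact hnorm c
  set φ : LinearMap.range L →L[ℂ] H' :=
    LinearMap.mkContinuous ((LinearMap.range L').subtype.comp ψ.toLinearMap) 1
      (fun x => by
        simp only [LinearMap.comp_apply, Submodule.subtype_apply]
        rw [one_mul]
        exact le_of_eq (hψnorm x)) with hφdef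
  set φ' : LinearMap.range L' →L[ℂ] H :=
    LinearMap.mkContinuous ((LinearMap.range L).subtype.comp ψ.symm.toLinearMap) 1
      (fun x => by
        simp only [LinearMap.comp_apply, Submodule.subtype_apply]
        rw [one_mul]
        exact le_of_eq (hψnorm' x)) with hφ'def
  have hφ_apply : ∀ x : LinearMap.range L, φ x = (ψ x : H') := fun x => rfl
  have hφ'_apply : ∀ x : LinearMap.range L', φ' x = (ψ.symm x : H) := fun x => rfl
  -- dense embeddings
  have hrange : LinearMap.range L = Submodule.span ℂ (Set.range f) :=
    Finsupp.range_linearCombination ℂ (v := f)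
  have hrange' : LinearMap.range L' = Submodule.span ℂ (Set.range f') :=
    Finsupp.range_linearCombination ℂ (v := f')
  set ι : LinearMap.range L →L[ℂ] H := (LinearMap.range L).subtypeL with hιdef
  set ι' : LinearMap.range L' →L[ℂ] H' := (LinearMap.range L').subtypeL with hι'def
  have hι_iso : Isometry ι := isometry_subtype_coe
  have hι'_iso : Isometry ι' := isometry_subtype_coe
  have hι_dense : DenseRange ι := by
    have : Dense ((LinearMap.range L : Submodule ℂ H) : Set H) := by
      rw [hrange]
      exact Submodule.dense_iff_topologicalClosure_eq_top.2 hd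
    simpa only [DenseRange, hιdef, Submodule.coe_subtypeL', Submodule.coe_subtype,
      Subtype.range_coe, Subtype.range_val, Subtype.range_coe_subtype, Set.setOf_mem_eq, SetLike.setOf_mem_eq] using this
  have hι'_dense : DenseRange ι' := by
    have : Dense ((LinearMap.range L' : Submodule ℂ H') : Set H') := by
      rw [hrange']
      exact Submodule.dense_iff_topologicalClosure_eq_top.2 hd'
    simpa only [DenseRange, hι'def, Submodule.coe_subtypeL', Submodule.coe_subtype,
      Subtype.range_coe, Subtype.range_val, Subtype.range_coe_subtype, Set.setOf_mem_eq, SetLike.setOf_mem_eq] using this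
  set V₁ : H →L[ℂ] H' := φ.extend ι with hV₁def
  set V₂ : H' →L[ℂ] H := φ'.extend ι' with hV₂def
  have hV₁ : ∀ x : LinearMap.range L, V₁ (x : H) = φ x := fun x =>
    ContinuousLinearMap.extend_eq φ (e := ι) hι_dense hι_iso.isUniformInducing x
  have hV₂ : ∀ x : LinearMap.range L', V₂ (x : H') = φ' x := fun x =>
    ContinuousLinearMap.extend_eq φ' (e := ι') hι'_dense hι'_iso.isUniformInducing x
  have hV₁L : ∀ c, V₁ (L c) = L' c := by
    intro c
    have := hV₁ ⟨L c, LinearMap.mem_range_self L c⟩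
    rw [hφ_apply, hψ c] at this
    exact this
  have hV₂L : ∀ c, V₂ (L' c) = L c := by
    intro c
    have := hV₂ ⟨L' c, LinearMap.mem_range_self L' c⟩
    rw [hφ'_apply, hψ' c] at this
    exact this
  -- properties by density
  have hnormV₁ : ∀ x : H, ‖V₁ x‖ = ‖x‖ := by
    intro x
    refine hι_dense.induction_on x (isClosed_eq (V₁.continuous.norm) continuous_norm) ?_
    rintro ⟨y, c, rfl⟩
    show ‖V₁ (L c)‖ = ‖L c‖
    rw [hV₁L c, hnorm c]
  have hleft : ∀ x : H, V₂ (V₁ x) = x := by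
    intro x
    refine hι_dense.induction_on x
      (isClosed_eq (V₂.continuous.comp V₁.continuous) continuous_id) ?_
    rintro ⟨y, c, rfl⟩
    show V₂ (V₁ (L c)) = L c
    rw [hV₁L c, hV₂L c]
  have hright : ∀ x : H', V₁ (V₂ x) = x := by
    intro x
    refine hι'_dense.induction_on x
      (isClosed_eq (V₁.continuous.comp V₂.continuous) continuous_id) ?_
    rintro ⟨y, c, rfl⟩
    show V₁ (V₂ (L' c)) = L' c
    rw [hV₂L c, hV₁L c]
  let Veq : H ≃ₗ[ℂ] H' :=
    { toFun := V₁
      map_add' := fun x y => V₁.map_add x y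
      map_smul' := fun cx x => V₁.map_smul cx x
      invFun := V₂
      left_inv := hleft
      right_inv := hright }
  refine ⟨⟨Veq, hnormV₁⟩, ?_⟩
  intro n
  have : f n = L (Finsupp.single n 1) := by
    simp [hL, Finsupp.linearCombination_single]
  show V₁ (f n) = f' n
  rw [this, hV₁L]
  simp [hL', Finsupp.linearCombination_single]


theorem kaczmarz_unitary_equivalence_iff
    {H : Type*} [NormedAddCommGroup H] [InnerProductSpace ℂ H] [CompleteSpace H]
    {H' : Type*} [NormedAddCommGroup H'] [InnerProductSpace ℂ H'] [CompleteSpace H']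
    (e g : ℕ → H) (e' g' : ℕ → H')
    (he : ∀ n, ‖e n‖ = 1) (he' : ∀ n, ‖e' n‖ = 1)
    (hg0 : g 0 = e 0)
    (hg : ∀ n, 0 < n → g n = e n - ∑ i ∈ Finset.range n, ⟪e i, e n⟫ • g i)
    (hg0' : g' 0 = e' 0)
    (hg' : ∀ n, 0 < n → g' n = e' n - ∑ i ∈ Finset.range n, ⟪e' i, e' n⟫ • g' i)
    (hdense : (Submodule.span ℂ (Set.range g)).topologicalClosure = ⊤)
    (hdense' : (Submodule.span ℂ (Set.range g')).topologicalClosure = ⊤)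
    (M U : ℕ → ℕ → ℂ) (M' U' : ℕ → ℕ → ℂ)
    (hM : ∀ i j, M i j = if j < i then ⟪e j, e i⟫ else 0)
    (hM' : ∀ i j, M' i j = if j < i then ⟪e' j, e' i⟫ else 0)
    (hUtri : ∀ i j, i ≤ j → U i j = 0)
    (hUtri' : ∀ i j, i ≤ j → U' i j = 0)
    (hUM : ∀ i j, (∑ k ∈ Finset.range (i + 1),
        (if i = k then 1 else U i k) * (if k = j then 1 else M k j)) =
      if i = j then 1 else 0)
    (hUM' : ∀ i j, (∑ k ∈ Finset.range (i + 1),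
        (if i = k then 1 else U' i k) * (if k = j then 1 else M' k j)) =
      if i = j then 1 else 0) :
    -- `{g_n}` and `{g'_n}` are unitarily equivalent iff `UU* = U'U'*` entrywise.
    (∃ V : H ≃ₗᵢ[ℂ] H', ∀ n, V (g n) = g' n) ↔
      ∀ i j : ℕ, (∑ k ∈ Finset.range (min i j), U i k * (starRingEnd ℂ) (U j k)) =
        ∑ k ∈ Finset.range (min i j), U' i k * (starRingEnd ℂ) (U' j k) := by
  have hGram := kacz_gram H e g M U he hg0 hg hM hUtri hUM
  have hGram' := kacz_gram H' e' g' M' U' he' hg0' hg' hM' hUtri' hUM'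
  constructor
  · rintro ⟨V, hV⟩ i j
    have h := V.inner_map_map (g j) (g i)
    rw [hV j, hV i] at h
    rw [show min i j = min j i from min_comm i j]
    linear_combination hGram j i - hGram' j i + h
  · intro h
    refine exists_isometry_of_inner_eq g g' (fun i j => ?_) hdense hdense'
    have hh := h j i
    rw [show min j i = min i j from min_comm j i] at hh
    linear_combination hGram i j - hGram' i j - hh
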